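/- Let S be a semitransitive subsemigroup of IS_n (partial bijections of a finite set X with |X| = n ≥ 1) that is not transitive. Then S contains the empty partial bijection (the zero of IS_n). -/

import Mathlib

def IsSubsemigroup {X : Type*} (S : Set (X ≃. X)) : Prop :=
  ∀ f ∈ S, ∀ g ∈ S, f.trans g ∈ S

def IsTransitiveSet {X : Type*} (S : Set (X ≃. X)) : Prop :=
  ∀ x y : X, ∃ f ∈ S, f x = some y

def IsSemitransitiveSet {X : Type*} (S : Set (X ≃. X)) : Prop :=
  ∀ x y : X, ∃ f ∈ S, f x = some y ∨ f y = some x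

namespace SemitransAux

variable {X : Type*} [Fintype X]

/-- domain of a partial bijection, as a finset -/
def dom (f : X ≃. X) : Finset X := Finset.univ.filter (fun x => (f x).isSome)

lemma mem_dom {f : X ≃. X} {x : X} : x ∈ dom f ↔ (f x).isSome := by simp [dom]

/-- rank of a partial bijection -/
def rk (f : X ≃. X) : ℕ := (dom f).card

lemma f_inj {f : X ≃. X} {a b c : X} (h1 : f a = some c) (h2 : f b = some c) : a = b := by
  have h1' := (f.eq_some_iff).2 h1
  have h2' := (f.eq_some_iff).2 h2
  rw [h1'] at h2'
  exact (Option.some_injective _ h2')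

lemma trans_apply (f g : X ≃. X) (a : X) : (f.trans g) a = (f a).bind g := rfl

lemma dom_trans_subset (f g : X ≃. X) : dom (f.trans g) ⊆ dom f := by
  intro x hx
  rw [mem_dom] at *
  rw [trans_apply] at hx
  cases h : f x with
  | none => rw [h] at hx; simp at hx
  | some y => simp [h]

lemma dom_trans_eq {f g : X ≃. X} (h : rk f ≤ rk (f.trans g)) :
    dom (f.trans g) = dom f :=
  (Finset.eq_of_subset_of_card_le (dom_trans_subset f g) h)

lemma step {f g : X ≃. X} (h : rk f ≤ rk (f.trans g)) {x y : X}
    (hxy : f x = some y) : (g y).isSome := by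
  have hx : x ∈ dom f := mem_dom.2 (by simp [hxy])
  rw [← dom_trans_eq h] at hx
  have h2 := mem_dom.1 hx
  rw [trans_apply, hxy] at h2
  exact h2

lemma card_dom_symm (f : X ≃. X) : (dom f.symm).card = (dom f).card := by
  classical
  apply Finset.card_bij (fun y _ => (f.symm y).get (by simpa using (mem_dom.1 ‹y ∈ dom f.symm›)))
  · intro y hy
    have hs : f.symm y = some ((f.symm y).get _) := (Option.some_get (mem_dom.1 hy)).symm
    have : f ((f.symm y).get _) = some y := (f.eq_some_iff).1 hs
    exact mem_dom.2 (by simp [this])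
  · intro a ha b hb hab
    have hsa : f.symm a = some ((f.symm a).get _) := (Option.some_get (mem_dom.1 ha)).symm
    have hsb : f.symm b = some ((f.symm b).get _) := (Option.some_get (mem_dom.1 hb)).symm
    rw [hab] at hsa
    exact f_inj (f := f.symm) hsa hsb
  · intro x hx
    have hsx : f x = some ((f x).get (mem_dom.1 hx)) := (Option.some_get (mem_dom.1 hx)).symm
    have hy : f.symm ((f x).get (mem_dom.1 hx)) = some x := (f.eq_some_iff).2 hsx
    refine ⟨(f x).get (mem_dom.1 hx), mem_dom.2 (by simp [hy]), ?_⟩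
    simp [hy]

end SemitransAux

open SemitransAux

/-- A semitransitive but not transitive subsemigroup of `IS_n` contains the zero
(the empty partial bijection). -/
theorem semitransitive_not_transitive_contains_zero {X : Type*} [Fintype X]
    (n : ℕ) (hn : 1 ≤ n) (hcard : Fintype.card X = n) (S : Set (X ≃. X))
    (hS : IsSubsemigroup S) (hsemi : IsSemitransitiveSet S) (htr : ¬ IsTransitiveSet S) :
    (⊥ : X ≃. X) ∈ S := by
  classical
  have hX : Nonempty X := by
    rw [← Fintype.card_pos_iff, hcard]; omega
  obtain ⟨x0⟩ := hX
  obtain ⟨f0, hf0, -⟩ := hsemi x0 x0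
  -- pick an element of minimal rank
  have hR : {m | ∃ f ∈ S, rk f = m}.Nonempty := ⟨rk f0, f0, hf0, rfl⟩
  obtain ⟨t, htS, htk⟩ := Nat.sInf_mem hR
  have htmin : ∀ f ∈ S, rk t ≤ rk f := by
    intro f hf
    rw [htk]
    exact Nat.sInf_le ⟨f, hf, rfl⟩
  by_cases hk : rk t = 0
  · -- t is the zero
    have hdome : dom t = ∅ := Finset.card_eq_zero.1 hk
    have : t = ⊥ := by
      apply PEquiv.ext
      intro a
      rw [PEquiv.bot_apply]
      by_contra h
      have : a ∈ dom t := mem_dom.2 (Option.ne_none_iff_isSome.1 h)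
      simp [hdome] at this
    rwa [this] at htS
  · exfalso
    -- every f ∈ S is defined on the image of t
    have hdef : ∀ f ∈ S, ∀ x y : X, t x = some y → (f y).isSome := by
      intro f hf x y hxy
      exact step (htmin _ (hS t htS f hf)) hxy
    -- dom t.symm = dom t
    have hA : dom t.symm = dom t := by
      apply Finset.eq_of_subset_of_card_le
      · intro y hy
        have hs : t.symm y = some ((t.symm y).get _) := (Option.some_get (mem_dom.1 hy)).symm
        have hty : t ((t.symm y).get _) = some y := (t.eq_some_iff).1 hs
        exact mem_dom.2 (hdef t htS _ _ hty)
      · rw [card_dom_symm]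
    -- every f ∈ S is defined on dom t
    have hdom' : ∀ f ∈ S, ∀ y ∈ dom t, (f y).isSome := by
      intro f hf y hy
      rw [← hA] at hy
      have hs : t.symm y = some ((t.symm y).get _) := (Option.some_get (mem_dom.1 hy)).symm
      have hty : t ((t.symm y).get _) = some y := (t.eq_some_iff).1 hs
      exact hdef f hf _ _ hty
    -- every f ∈ S maps dom t into dom t
    have hmaps : ∀ f ∈ S, ∀ y ∈ dom t, ∀ z, f y = some z → z ∈ dom t := by
      intro f hf y hy z hz
      rw [← hA] at hy
      have hs : t.symm y = some ((t.symm y).get _) := (Option.some_get (mem_dom.1 hy)).symm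
      have hty : t ((t.symm y).get _) = some y := (t.eq_some_iff).1 hs
      set s := t.trans f with hsdef
      have hsS : s ∈ S := hS t htS f hf
      have hsx : s ((t.symm y).get (mem_dom.1 hy)) = some z := by
        rw [trans_apply, hty]; exact hz
      have hrks : rk s = rk t := by
        unfold rk
        rw [dom_trans_eq (htmin _ hsS)]
      have hrk2 : rk s ≤ rk (s.trans t) := by
        rw [hrks]
        exact htmin _ (hS s hsS t htS)
      exact mem_dom.2 (step hrk2 hsx)
    by_cases hall : ∀ x : X, x ∈ dom t
    · -- everything total: S is transitive, contradiction
      apply htr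
      intro x y
      obtain ⟨f, hf, hcase⟩ := hsemi x y
      rcases hcase with h | h
      · exact ⟨f, hf, h⟩
      · -- f y = some x; use powers of f
        have htot : ∀ z, (f z).isSome := fun z => hdom' f hf z (hall z)
        set F : X → X := fun z => (f z).get (htot z) with hFdef
        have hF : ∀ z, f z = some (F z) := fun z => (Option.some_get (htot z)).symm
        have hFinj : Function.Injective F := by
          intro a b hab
          exact f_inj (hF a) (by rw [hF b, hab])
        -- pigeonhole on the orbit of x
        have hcardlt : Fintype.card X < Fintype.card (Fin (n+1)) := by
          rw [hcard]; simp
        obtain ⟨i, j, hij, hEq⟩ :=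
          Fintype.exists_ne_map_eq_of_card_lt (fun m : Fin (n+1) => F^[(m : ℕ)] x) hcardlt
        -- wlog i < j
        have key : ∀ i j : ℕ, i < j → F^[i] x = F^[j] x → x = F^[j - i] x := by
          intro i j hlt heq
          have : F^[i] x = F^[i] (F^[j-i] x) := by
            rw [← Function.iterate_add_apply]
            rw [Nat.add_sub_cancel' (le_of_lt hlt)] at *
            exact heq
          exact Function.Injective.iterate hFinj i this
        have hd : ∃ d : ℕ, 1 ≤ d ∧ x = F^[d] x := by
          rcases lt_or_gt_of_ne (fun hc : (i:ℕ) = (j:ℕ) => hij (Fin.ext hc)) with hlt | hlt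
          · exact ⟨j - i, by omega, key i j hlt hEq⟩
          · exact ⟨i - j, by omega, key j i hlt hEq.symm⟩
        obtain ⟨d, hd1, hdx⟩ := hd
        -- f y = some x and x = F^[d] x so y = F^[d-1] x
        have hfd : f (F^[d-1] x) = some x := by
          have h1 : F^[d] x = F (F^[d-1] x) := by
            conv_lhs => rw [show d = (d-1)+1 from by omega]
            rw [Function.iterate_succ_apply']
          rw [hF (F^[d-1] x), ← h1, ← hdx]
        have hy : y = F^[d-1] x := f_inj h hfd
        -- iterated compositions of f lie in S
        have hpow : ∀ m : ℕ, ∃ g ∈ S, ∀ z, g z = some (F^[m+1] z) := by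
          intro m
          induction m with
          | zero => exact ⟨f, hf, fun z => by simpa using hF z⟩
          | succ k ih =>
            obtain ⟨g, hg, hgz⟩ := ih
            refine ⟨g.trans f, hS g hg f hf, fun z => ?_⟩
            rw [trans_apply, hgz z]
            simp only [Option.bind_some]
            rw [hF (F^[k+1] z)]
            exact congrArg some (Function.iterate_succ_apply' F (k+1) z).symm
        rcases Nat.lt_or_ge d 2 with hd2 | hd2
        · -- d = 1 : then y = x and f x = some x
          have hd1' : d = 1 := by omega
          rw [hd1'] at hfd hy
          have hfd' : f x = some x := hfd
          have hy' : y = x := hy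
          refine ⟨f, hf, ?_⟩
          rw [hy']
          exact hfd'
        · obtain ⟨g, hg, hgz⟩ := hpow (d - 2)
          refine ⟨g, hg, ?_⟩
          rw [hy, hgz x, show d-2+1 = d-1 from by omega]
    · -- some x outside dom t: injectivity contradiction
      push_neg at hall
      obtain ⟨x, hx⟩ := hall
      have hApos : (dom t).Nonempty := Finset.card_pos.1 (Nat.pos_of_ne_zero hk)
      obtain ⟨α, hα⟩ := hApos
      obtain ⟨f, hf, hcase⟩ := hsemi x α
      have hfx : f x = some α := by
        rcases hcase with h | h
        · exact h
        · exact absurd (hmaps f hf α hα x h) hx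
      -- f restricted to dom t is injective hence surjective
      set G : {a // a ∈ dom t} → {a // a ∈ dom t} :=
        fun a => ⟨(f a.1).get (hdom' f hf a.1 a.2),
          hmaps f hf a.1 a.2 _ (Option.some_get _).symm⟩ with hGdef
      have hGinj : Function.Injective G := by
        intro a b hab
        have ha' : f a.1 = some ((f a.1).get (hdom' f hf a.1 a.2)) := (Option.some_get _).symm
        have hb' : f b.1 = some ((f b.1).get (hdom' f hf b.1 b.2)) := (Option.some_get _).symm
        have : (f a.1).get (hdom' f hf a.1 a.2) = (f b.1).get (hdom' f hf b.1 b.2) :=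
          congrArg Subtype.val hab
        exact Subtype.ext (f_inj ha' (by rw [hb', this]))
      have hGsurj : Function.Surjective G := Finite.surjective_of_injective hGinj
      obtain ⟨a₀, ha₀⟩ := hGsurj ⟨α, hα⟩
      have hfa₀ : f a₀.1 = some α := by
        have := congrArg Subtype.val ha₀
        simp only [hGdef] at this
        rw [← this]
        exact (Option.some_get _).symm
      exact hx (f_inj hfx hfa₀ ▸ a₀.2)
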